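/- arXiv:2203.11342 — 5 statements merged into one kernel-verified Lean document; each statement's English description precedes it below -/
import Mathlib

section
/- For every positive integer n and every real ε with 0 < ε < 1, ∫_ε^1 dt/(t^{2n+1}·sinh t) = − Σ_{k=0}^∞ (2^{2k}−2)·B_{2k}·(1 − ε^{2k−2n−1})/((2k)!·(2k−2n−1)), where the series converges. -/
open Real MeasureTheory Filter Finset intervalIntegral

namespace CschAux

section FPS
open PowerSeries

lemma fps_identity :
    (2 * bernoulliPowerSeries ℚ - rescale (2:ℚ) (bernoulliPowerSeries ℚ)) *
      (PowerSeries.exp ℚ - evalNegHom (PowerSeries.exp ℚ)) = 2 * X := by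
  set B := bernoulliPowerSeries ℚ
  set E := PowerSeries.exp ℚ
  have hB : B * (E - 1) = X := bernoulliPowerSeries_mul_exp_sub_one ℚ
  have hE2 : rescale (2:ℚ) E = E ^ 2 := by
    rw [exp_pow_eq_rescale_exp]; norm_num; rfl
  have hBE2 : rescale (2:ℚ) B * (E ^ 2 - 1) = 2 * X := by
    rw [← hE2, show (1 : ℚ⟦X⟧) = rescale (2:ℚ) 1 from (map_one _).symm, ← map_sub, ← map_mul,
      hB, rescale_X]
    rw [show PowerSeries.C (2:ℚ) = (2 : ℚ⟦X⟧) from map_ofNat _ 2]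
  have hEinv : E * evalNegHom E = 1 := exp_mul_exp_neg_eq_one (A := ℚ)
  have hEne : E ≠ 0 := by
    intro h
    have : PowerSeries.constantCoeff E = 1 := by
      simp [E, PowerSeries.exp, ← PowerSeries.coeff_zero_eq_constantCoeff]
    rw [h] at this; simp at this
  apply mul_right_cancel₀ hEne
  calc (2 * B - rescale (2:ℚ) B) * (E - evalNegHom E) * E
      = (2 * B - rescale (2:ℚ) B) * (E ^ 2 - E * evalNegHom E) := by ring
    _ = (2 * B - rescale (2:ℚ) B) * (E ^ 2 - 1) := by rw [hEinv]
    _ = 2 * (B * (E - 1)) * (E + 1) - rescale (2:ℚ) B * (E ^ 2 - 1) := by ring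
    _ = 2 * X * (E + 1) - 2 * X := by rw [hB, hBE2]
    _ = 2 * X * E := by ring

lemma conv_identity (N : ℕ) :
    ∑ p ∈ Finset.HasAntidiagonal.antidiagonal N,
      ((2 - 2 ^ p.1) * bernoulli p.1 / p.1.factorial * ((1 - (-1) ^ p.2) / p.2.factorial) : ℚ) =
      if N = 1 then 2 else 0 := by
  have h := congrArg (PowerSeries.coeff N) fps_identity
  rw [coeff_mul] at h
  rw [show (2 : ℚ⟦X⟧) = PowerSeries.C (2:ℚ) from (map_ofNat _ 2).symm] at h
  simp only [map_sub, coeff_C_mul, coeff_rescale, coeff_X, bernoulliPowerSeries, coeff_mk,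
    evalNegHom, coeff_exp, Algebra.algebraMap_self_apply, RingHom.id_apply, mul_ite, mul_one, mul_zero] at h
  rw [← h]
  refine Finset.sum_congr rfl fun p hp => ?_
  ring

end FPS

lemma bern_bound (k : ℕ) (hk : k ≠ 0) :
    |(bernoulli (2 * k) : ℝ)| / (2 * k).factorial ≤ 6 / (2 * π) ^ (2 * k) := by
  have h := hasSum_zeta_nat hk
  have h1 := hasSum_zeta_nat one_ne_zero
  set V : ℝ := (-1 : ℝ) ^ (k + 1) * (2 : ℝ) ^ (2 * k - 1) * π ^ (2 * k) *
      (bernoulli (2 * k) : ℝ) / (2 * k).factorial with hV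
  have hnonneg : ∀ n : ℕ, (0:ℝ) ≤ 1 / (n : ℝ) ^ (2 * k) := fun n => by positivity
  have hV0 : 0 ≤ V := h.nonneg hnonneg
  have hVle : V ≤ (-1 : ℝ) ^ (1 + 1) * (2 : ℝ) ^ (2 * 1 - 1) * π ^ (2 * 1) *
      (bernoulli (2 * 1) : ℝ) / (2 * 1).factorial := by
    refine hasSum_le (fun n => ?_) h h1
    rcases Nat.eq_zero_or_pos n with rfl | hn
    · rw [Nat.cast_zero, zero_pow (by omega : 2 * k ≠ 0), zero_pow (by omega : 2 * 1 ≠ 0)]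
    · apply one_div_le_one_div_of_le (by positivity)
      exact pow_le_pow_right₀ (by exact_mod_cast hn) (by omega)
  have hb2 : (bernoulli 2 : ℝ) = 1 / 6 := by
    rw [show bernoulli 2 = bernoulli' 2 by rw [bernoulli]; norm_num, bernoulli'_two]
    norm_num
  have hV3 : V ≤ 3 := by
    refine hVle.trans ?_
    norm_num [hb2]
    nlinarith [Real.pi_le_four, Real.pi_pos]
  have hpi : (0:ℝ) < π := Real.pi_pos
  have hfact : (0:ℝ) < (2 * k).factorial := by positivity
  have habs : V * ((2 * k).factorial : ℝ)
      = 2 ^ (2 * k - 1) * π ^ (2 * k) * |(bernoulli (2 * k) : ℝ)| := by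
    have h1' : V * ((2 * k).factorial : ℝ)
        = (-1:ℝ) ^ (k+1) * 2 ^ (2*k-1) * π ^ (2*k) * (bernoulli (2*k) : ℝ) := by
      rw [hV, div_mul_cancel₀ _ (ne_of_gt hfact)]
    calc V * ((2 * k).factorial : ℝ) = |V * ((2 * k).factorial : ℝ)| :=
          (abs_of_nonneg (mul_nonneg hV0 hfact.le)).symm
      _ = |(-1:ℝ) ^ (k+1) * 2 ^ (2*k-1) * π ^ (2*k) * (bernoulli (2*k) : ℝ)| := by rw [h1']
      _ = 2 ^ (2 * k - 1) * π ^ (2 * k) * |(bernoulli (2 * k) : ℝ)| := by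
          simp [abs_mul, abs_pow, abs_of_pos hpi, abs_two]
  rw [div_le_div_iff₀ hfact (by positivity)]
  have h2k : (2:ℝ) ^ (2 * k) = 2 * 2 ^ (2 * k - 1) := by
    rw [← pow_succ']; congr 1; omega
  rw [mul_pow, h2k]
  nlinarith [hV3, hfact, habs, abs_nonneg ((bernoulli (2*k) : ℝ)),
    pow_pos hpi (2*k), pow_pos (by norm_num : (0:ℝ) < 2) (2*k-1)]

lemma bern_odd (i : ℕ) (h : Odd i) (h1 : 1 < i) : bernoulli i = 0 := by
  rw [bernoulli, bernoulli'_eq_zero_of_odd h h1, mul_zero]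

lemma A_bound (t : ℝ) (ht0 : 0 ≤ t) (ht1 : t ≤ 1) (i : ℕ) :
    |((2:ℝ) - 2 ^ i) * (bernoulli i : ℝ) / i.factorial * t ^ i| ≤ 6 * (1/3) ^ i := by
  have hti : |t ^ i| ≤ 1 := by
    rw [abs_pow, abs_of_nonneg ht0]
    exact pow_le_one₀ ht0 ht1
  rcases Nat.even_or_odd i with ⟨k, hk⟩ | hodd
  · rcases Nat.eq_zero_or_pos k with rfl | hkpos
    · subst hk; norm_num [Nat.factorial]
    · have hk2 : i = 2 * k := by omega
      subst hk2
      have hb := bern_bound k (by omega)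
      have hpi3 : (3:ℝ) < π := Real.pi_gt_three
      have h2pos : (0:ℝ) < 2 ^ (2*k) := by positivity
      have h2big : (2:ℝ) ≤ 2 ^ (2*k) := by
        calc (2:ℝ) = 2 ^ 1 := (pow_one 2).symm
        _ ≤ 2 ^ (2*k) := pow_le_pow_right₀ (by norm_num) (by omega)
      rw [abs_mul, abs_div, abs_mul]
      have h2 : |(2:ℝ) - 2 ^ (2*k)| ≤ 2 ^ (2*k) := by
        rw [abs_sub_comm, abs_of_nonneg (by linarith)]
        linarith
      have hfabs : |((2*k).factorial : ℝ)| = ((2*k).factorial : ℝ) := abs_of_pos (by positivity)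
      rw [hfabs]
      calc |(2:ℝ) - 2 ^ (2*k)| * |(bernoulli (2*k) : ℝ)| / ((2*k).factorial : ℝ) * |t ^ (2*k)|
          ≤ 2 ^ (2*k) * (|(bernoulli (2*k) : ℝ)| / ((2*k).factorial : ℝ)) * 1 := by
            rw [mul_div_assoc]
            refine mul_le_mul (mul_le_mul h2 le_rfl (by positivity) h2pos.le) hti
              (abs_nonneg _) (by positivity)
        _ ≤ 2 ^ (2*k) * (6 / (2 * π) ^ (2*k)) * 1 := by
            refine mul_le_mul_of_nonneg_right (mul_le_mul_of_nonneg_left hb (by positivity))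
              (by norm_num)
        _ = 6 * (1/π) ^ (2*k) := by
            rw [mul_pow, div_pow, one_pow]
            field_simp
        _ ≤ 6 * (1/3) ^ (2*k) := by
            have h13 : (1/π : ℝ) ≤ 1/3 := by
              rw [div_le_div_iff₀ (by linarith) (by norm_num)]; linarith
            exact mul_le_mul_of_nonneg_left (pow_le_pow_left₀ (by positivity) h13 _) (by norm_num)
  · rcases Nat.lt_or_ge 1 i with hgt | hle
    · rw [bern_odd i hodd hgt]
      push_cast
      simp only [mul_zero, zero_mul, zero_div, abs_zero]
      positivity
    · have : i = 1 := by rcases hodd with ⟨m, hm⟩; omega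
      subst this
      norm_num

lemma hasSum_csch (t : ℝ) (ht0 : 0 < t) (ht1 : t ≤ 1) :
    HasSum (fun k : ℕ => ((2:ℝ) - 2 ^ (2*k)) * (bernoulli (2*k) : ℝ) / (2*k).factorial * t ^ (2*k))
      (t / Real.sinh t) := by
  set A : ℕ → ℝ := fun i => ((2:ℝ) - 2 ^ i) * (bernoulli i : ℝ) / i.factorial * t ^ i with hA
  set Bb : ℕ → ℝ := fun j => (1 - (-1:ℝ) ^ j) / (2 * j.factorial) * t ^ j with hBb
  -- summability of A
  have hAnorm : Summable fun i => ‖A i‖ := by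
    refine Summable.of_nonneg_of_le (fun i => norm_nonneg _)
      (fun i => A_bound t ht0.le ht1 i) ?_
    exact (summable_geometric_of_lt_one (by norm_num) (by norm_num)).mul_left 6
  -- summability of Bb
  have hBnorm : Summable fun j => ‖Bb j‖ := by
    refine Summable.of_nonneg_of_le (fun j => norm_nonneg _) (fun j => ?_)
      (Real.summable_pow_div_factorial t)
    rw [hBb]
    simp only [Real.norm_eq_abs, abs_mul, abs_div, abs_pow, abs_of_pos ht0]
    have h1 : |1 - (-1:ℝ) ^ j| ≤ 2 := by
      rcases Nat.even_or_odd j with he | ho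
      · rw [he.neg_one_pow]; norm_num
      · rw [ho.neg_one_pow]; norm_num
    rw [abs_two, abs_of_nonneg (by positivity : (0:ℝ) ≤ (j.factorial:ℝ))]
    rw [div_mul_eq_mul_div, div_le_div_iff₀ (by positivity) (by positivity)]
    calc |1 - (-1:ℝ) ^ j| * t ^ j * j.factorial ≤ 2 * t ^ j * j.factorial := by
          refine mul_le_mul_of_nonneg_right (mul_le_mul_of_nonneg_right h1 (by positivity)) (by positivity)
      _ = t ^ j * (2 * j.factorial) := by ring
  -- HasSum Bb (sinh t)
  have hBsum : HasSum Bb (Real.sinh t) := by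
    have hinj : Function.Injective (fun l : ℕ => 2 * l + 1) := by intro a b h; dsimp only at h; omega
    have h0 : ∀ j, j ∉ Set.range (fun l : ℕ => 2 * l + 1) → Bb j = 0 := by
      intro j hj
      have hje : Even j := by
        rcases Nat.even_or_odd j with he | ho
        · exact he
        · obtain ⟨l, rfl⟩ := ho
          exact absurd ⟨l, rfl⟩ hj
      rw [hBb]
      simp [hje.neg_one_pow]
    have key : (fun l : ℕ => Bb (2 * l + 1)) = fun l : ℕ => t ^ (2*l+1) / (2*l+1).factorial := by
      funext l
      rw [hBb]
      dsimp only
      have : (-1:ℝ) ^ (2*l+1) = -1 := (Nat.odd_iff.mpr (by omega) : Odd (2*l+1)).neg_one_pow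
      rw [this]
      field_simp
      ring
    refine (Function.Injective.hasSum_iff hinj h0).mp ?_
    have hs := Real.hasSum_sinh t
    convert hs using 1
    exact key
  -- A vanishes at odd indices
  have hAodd : ∀ i, Odd i → A i = 0 := by
    intro i hi
    rcases Nat.lt_or_ge 1 i with hgt | hle
    · rw [hA]; dsimp only
      rw [show bernoulli i = 0 from by
        rw [bernoulli, bernoulli'_eq_zero_of_odd hi hgt, mul_zero]]
      push_cast; ring
    · have : i = 1 := by rcases hi with ⟨m, hm⟩; omega
      subst this
      rw [hA]; norm_num
  -- Cauchy product
  have hsinh_ne : Real.sinh t ≠ 0 := by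
    rw [Real.sinh_ne_zero]; exact ne_of_gt ht0
  have hterm : ∀ N : ℕ, (∑ p ∈ Finset.HasAntidiagonal.antidiagonal N, A p.1 * Bb p.2)
      = if N = 1 then t else 0 := by
    intro N
    have hq := conv_identity N
    have hcast := congrArg (fun q : ℚ => (q : ℝ)) hq
    push_cast at hcast
    calc (∑ p ∈ Finset.HasAntidiagonal.antidiagonal N, A p.1 * Bb p.2)
        = ∑ p ∈ Finset.HasAntidiagonal.antidiagonal N,
            ((2 - 2 ^ p.1) * (bernoulli p.1 : ℝ) / p.1.factorial *
              ((1 - (-1) ^ p.2) / p.2.factorial)) * t ^ N / 2 := by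
          refine Finset.sum_congr rfl fun p hp => ?_
          rw [Finset.HasAntidiagonal.mem_antidiagonal] at hp
          rw [hA, hBb]
          dsimp only
          rw [← hp, pow_add]
          ring
      _ = (∑ p ∈ Finset.HasAntidiagonal.antidiagonal N,
            ((2 - 2 ^ p.1) * (bernoulli p.1 : ℝ) / p.1.factorial *
              ((1 - (-1) ^ p.2) / p.2.factorial))) * t ^ N / 2 := by
          rw [← Finset.sum_div, ← Finset.sum_mul]
      _ = (if N = 1 then (2:ℝ) else 0) * t ^ N / 2 := by
          rw [hcast]; split_ifs <;> norm_num
      _ = if N = 1 then t else 0 := by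
          by_cases hN : N = 1
          · subst hN; simp
          · simp [hN]
  have hprod : (∑' i, A i) * Real.sinh t = t := by
    rw [← hBsum.tsum_eq, tsum_mul_tsum_eq_tsum_sum_antidiagonal_of_summable_norm hAnorm hBnorm]
    rw [tsum_congr hterm]
    exact tsum_ite_eq 1 (fun _ => t)
  have htsumA : (∑' i, A i) = t / Real.sinh t := by
    rw [eq_div_iff hsinh_ne]; exact hprod
  have hAsum : HasSum A (t / Real.sinh t) := htsumA ▸ hAnorm.of_norm.hasSum
  -- restrict to even indices
  have hinj2 : Function.Injective (fun k : ℕ => 2 * k) := by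
    intro a b h; dsimp only at h; omega
  have h02 : ∀ i, i ∉ Set.range (fun k : ℕ => 2 * k) → A i = 0 := by
    intro i hi
    refine hAodd i ?_
    rcases Nat.even_or_odd i with ⟨l, hl⟩ | ho
    · exact absurd ⟨l, by dsimp only; omega⟩ hi
    · exact ho
  exact (Function.Injective.hasSum_iff hinj2 h02).mpr hAsum

end CschAux

open CschAux

/-- Series evaluation of ∫_ε^1 dt/(t^{2n+1} sinh t) for 0 < ε < 1. -/
theorem integral_csch_eps_one (n : ℕ) (hn : 0 < n) (ε : ℝ) (hε0 : 0 < ε)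
    (hε1 : ε < 1) :
    Summable (fun k : ℕ =>
        ((2 : ℝ) ^ (2 * k) - 2) * (bernoulli (2 * k) : ℝ) *
            (1 - ε ^ (2 * (k : ℤ) - 2 * (n : ℤ) - 1)) /
          (((2 * k).factorial : ℝ) * (2 * (k : ℝ) - 2 * (n : ℝ) - 1))) ∧
    (∫ t in ε..1, 1 / (t ^ (2 * n + 1) * Real.sinh t)) =
      -∑' k : ℕ,
          ((2 : ℝ) ^ (2 * k) - 2) * (bernoulli (2 * k) : ℝ) *
              (1 - ε ^ (2 * (k : ℤ) - 2 * (n : ℤ) - 1)) /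
            (((2 * k).factorial : ℝ) * (2 * (k : ℝ) - 2 * (n : ℝ) - 1)) := by
  set c : ℕ → ℝ := fun k => ((2:ℝ) - 2 ^ (2*k)) * (bernoulli (2*k) : ℝ) / (2*k).factorial with hc
  set e : ℕ → ℤ := fun k => 2*(k:ℤ) - 2*(n:ℤ) - 2 with he
  set S : ℕ → ℝ := fun k => ((2 : ℝ) ^ (2 * k) - 2) * (bernoulli (2 * k) : ℝ) *
      (1 - ε ^ (2 * (k : ℤ) - 2 * (n : ℤ) - 1)) /
      (((2 * k).factorial : ℝ) * (2 * (k : ℝ) - 2 * (n : ℝ) - 1)) with hS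
  set F : ℕ → ℝ → ℝ := fun k t => c k * t ^ (e k) with hF
  -- pointwise HasSum
  have hFsum : ∀ t : ℝ, 0 < t → t ≤ 1 →
      HasSum (fun k => F k t) (1 / (t ^ (2*n+1) * Real.sinh t)) := by
    intro t ht0 ht1
    have h := (hasSum_csch t ht0 ht1).mul_right ((t:ℝ) ^ (-(2*(n:ℤ)) - 2))
    have hfun : ∀ k : ℕ, (((2:ℝ) - 2 ^ (2*k)) * (bernoulli (2*k) : ℝ) / (2*k).factorial * t ^ (2*k))
        * t ^ (-(2*(n:ℤ)) - 2) = F k t := by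
      intro k
      rw [hF]; dsimp only
      rw [hc]; dsimp only
      rw [he]; dsimp only
      rw [mul_assoc, ← zpow_natCast t (2*k), ← zpow_add₀ (ne_of_gt ht0)]
      congr 2
      push_cast; ring
    have hval : t / Real.sinh t * t ^ (-(2*(n:ℤ)) - 2) = 1 / (t ^ (2*n+1) * Real.sinh t) := by
      have h1 : (t:ℝ) ^ (-(2*(n:ℤ)) - 2) = (t ^ (2*n+2))⁻¹ := by
        rw [show -(2*(n:ℤ)) - 2 = -(((2*n+2 : ℕ)) : ℤ) by push_cast; ring, zpow_neg, zpow_natCast]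
      rw [h1]
      rw [show 2*n+2 = (2*n+1)+1 from rfl, pow_succ]
      field_simp
    rw [← hval]
    exact HasSum.congr_fun h fun k => (hfun k).symm
  -- basic positivity facts
  have h0notin : (0:ℝ) ∉ Set.uIcc ε 1 := by
    rw [Set.uIcc_of_le hε1.le, Set.mem_Icc]
    push_neg
    intro h; linarith
  -- integrability on [ε, 1]
  have hIk : ∀ k, IntervalIntegrable (F k) volume ε 1 := by
    intro k
    have := (intervalIntegrable_zpow (μ := volume) (n := e k) (a := ε) (b := 1) (Or.inr h0notin)).const_mul (c k)
    exact this
  have hInt' : ∀ k, IntegrableOn (F k) (Set.Ioc ε 1) volume := fun k =>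
    (intervalIntegrable_iff_integrableOn_Ioc_of_le hε1.le).mp (hIk k)
  -- value of each interval integral
  have hIval : ∀ k, ∫ t in ε..1, F k t
      = c k * ((1 - ε ^ (2*(k:ℤ) - 2*(n:ℤ) - 1)) / (2*(k:ℝ) - 2*(n:ℝ) - 1)) := by
    intro k
    rw [hF]; dsimp only
    rw [intervalIntegral.integral_const_mul, integral_zpow (Or.inr ⟨by simp only [he]; omega, h0notin⟩)]
    congr 1
    rw [he]; dsimp only
    rw [show (2*(k:ℤ) - 2*(n:ℤ) - 2) + 1 = 2*(k:ℤ) - 2*(n:ℤ) - 1 by ring, one_zpow]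
    congr 1
    push_cast; ring
  -- relation to the statement's terms
  have hSk : ∀ k, ∫ t in Set.Ioc ε 1, F k t = - S k := by
    intro k
    rw [← intervalIntegral.integral_of_le hε1.le, hIval k, hS, hc]
    dsimp only
    rw [div_mul_eq_div_div_swap]
    ring
  -- norm bound for the integrals
  have hCnonneg : ∀ k, (0:ℝ) ≤ |c k| / ε ^ (2*n+2) := fun k => by positivity
  have hnormle : ∀ k, ∀ t ∈ Set.Ioc ε 1, ‖F k t‖ ≤ |c k| / ε ^ (2*n+2) := by
    intro k t ht
    obtain ⟨ht0, ht1⟩ := ht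
    have htpos : 0 < t := hε0.trans ht0
    rw [hF]; dsimp only
    rw [norm_mul, Real.norm_eq_abs, Real.norm_eq_abs,
      abs_of_pos (zpow_pos htpos _), div_eq_mul_inv]
    refine mul_le_mul_of_nonneg_left ?_ (abs_nonneg _)
    rw [he]; dsimp only
    rw [show 2*(k:ℤ) - 2*(n:ℤ) - 2 = ((2*k : ℕ) : ℤ) - ((2*n+2 : ℕ) : ℤ) by push_cast; ring,
      zpow_sub₀ (ne_of_gt htpos), zpow_natCast, zpow_natCast]
    rw [inv_eq_one_div, div_le_div_iff₀ (by positivity) (by positivity)]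
    refine mul_le_mul (pow_le_one₀ htpos.le ht1) (pow_le_pow_left₀ hε0.le ht0.le _)
      (by positivity) (by norm_num)
  have hintnormle : ∀ k, (∫ t in Set.Ioc ε 1, ‖F k t‖) ≤ |c k| / ε ^ (2*n+2) := by
    intro k
    calc (∫ t in Set.Ioc ε 1, ‖F k t‖)
        ≤ ∫ _t in Set.Ioc ε 1, (|c k| / ε ^ (2*n+2)) := by
          refine setIntegral_mono_on ((hInt' k).norm) ?_ measurableSet_Ioc (hnormle k)
          exact integrableOn_const (measure_Ioc_lt_top).ne
      _ = (volume (Set.Ioc ε 1)).toReal * (|c k| / ε ^ (2*n+2)) := by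
          rw [setIntegral_const, smul_eq_mul, measureReal_def]
      _ ≤ 1 * (|c k| / ε ^ (2*n+2)) := by
          refine mul_le_mul_of_nonneg_right ?_ (hCnonneg k)
          rw [Real.volume_Ioc, ENNReal.toReal_ofReal (by linarith)]
          linarith
      _ = |c k| / ε ^ (2*n+2) := one_mul _
  -- summability of |c|
  have hsummableC : Summable fun k => |c k| := by
    refine Summable.of_nonneg_of_le (fun k => abs_nonneg _) (fun k => ?_)
      (((summable_geometric_of_lt_one (r := (1/9:ℝ)) (by norm_num) (by norm_num)).mul_left 6))
    have := A_bound 1 zero_le_one le_rfl (2*k)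
    rw [one_pow, mul_one] at this
    calc |c k| ≤ 6 * (1/3:ℝ) ^ (2*k) := this
      _ = 6 * (1/9:ℝ) ^ k := by rw [pow_mul]; norm_num
  have hsum_int_norm : Summable fun k => ∫ t in Set.Ioc ε 1, ‖F k t‖ := by
    refine Summable.of_nonneg_of_le (fun k => integral_nonneg fun t => norm_nonneg _)
      hintnormle ?_
    simpa [div_eq_mul_inv] using hsummableC.mul_right (ε ^ (2*n+2))⁻¹
  -- swap integral and sum
  have hswap := MeasureTheory.integral_tsum_of_summable_integral_norm hInt' hsum_int_norm
  have hH := MeasureTheory.hasSum_integral_of_summable_integral_norm hInt' hsum_int_norm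
  have hIoc_eq : (∫ t in Set.Ioc ε 1, (∑' k, F k t))
      = ∫ t in Set.Ioc ε 1, 1 / (t ^ (2*n+1) * Real.sinh t) := by
    refine setIntegral_congr_fun measurableSet_Ioc fun t ht => ?_
    exact (hFsum t (hε0.trans ht.1) ht.2).tsum_eq
  constructor
  · refine (hH.summable.neg).congr fun k => ?_
    rw [hSk k, neg_neg]
  · calc (∫ t in ε..1, 1 / (t ^ (2 * n + 1) * Real.sinh t))
        = ∫ t in Set.Ioc ε 1, 1 / (t ^ (2*n+1) * Real.sinh t) :=
          intervalIntegral.integral_of_le hε1.le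
      _ = ∫ t in Set.Ioc ε 1, (∑' k, F k t) := hIoc_eq.symm
      _ = ∑' k, ∫ t in Set.Ioc ε 1, F k t := hswap.symm
      _ = ∑' k, (- S k) := tsum_congr hSk
      _ = - ∑' k, S k := tsum_neg
end

section
/- For all positive integers n and k, ∫_1^∞ dt/( t^{2n}·(π²k² + t²) ) = Σ_{l=1}^{n} (−1)^l/((2l−2n−1)·π^{2l}·k^{2l}) + (−1)^n/(2·π^{2n}·k^{2n+1}) − (−1)^n·arctan(1/(kπ))/(π^{2n+1}·k^{2n+1}). -/
open Real MeasureTheory Filter Finset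

lemma int1 (a : ℝ) (ha : 0 < a) (n : ℕ) :
    IntegrableOn (fun t : ℝ => 1 / (t ^ n * (a ^ 2 + t ^ 2))) (Set.Ioi 1) := by
  have hmaj : IntegrableOn (fun t : ℝ => t ^ (-2 : ℝ)) (Set.Ioi 1) :=
    integrableOn_Ioi_rpow_of_lt (by norm_num) one_pos
  refine hmaj.mono' ?_ ?_
  · refine (ContinuousOn.div continuousOn_const ?_ ?_).aestronglyMeasurable measurableSet_Ioi
    · exact ((continuousOn_pow n).mul (continuousOn_const.add (continuousOn_pow 2)))
    · intro t ht
      have htp : (0:ℝ) < t := lt_trans one_pos ht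
      positivity
  · rw [ae_restrict_iff' measurableSet_Ioi]
    filter_upwards with t ht
    have ht1 : (1:ℝ) < t := ht
    have htp : (0:ℝ) < t := lt_trans one_pos ht1
    have h1 : (1:ℝ) ≤ t ^ n := one_le_pow₀ ht1.le
    have h2 : t ^ 2 ≤ t ^ n * (a ^ 2 + t ^ 2) := by nlinarith [sq_nonneg a, sq_nonneg t]
    have h3 : (0:ℝ) < t ^ 2 := by positivity
    rw [Real.norm_eq_abs, abs_of_nonneg (by positivity)]
    calc 1 / (t ^ n * (a ^ 2 + t ^ 2)) ≤ 1 / t ^ 2 := one_div_le_one_div_of_le h3 h2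
      _ = t ^ (-2 : ℝ) := by
          rw [Real.rpow_neg htp.le, ← Real.rpow_natCast t 2]
          norm_num

lemma int2 (n : ℕ) : IntegrableOn (fun t : ℝ => 1 / t ^ (n + 2)) (Set.Ioi 1) := by
  have hmaj : IntegrableOn (fun t : ℝ => t ^ (-2 : ℝ)) (Set.Ioi 1) :=
    integrableOn_Ioi_rpow_of_lt (by norm_num) one_pos
  refine hmaj.mono' ?_ ?_
  · refine (ContinuousOn.div continuousOn_const (continuousOn_pow _) ?_).aestronglyMeasurable
      measurableSet_Ioi
    intro t ht
    have htp : (0:ℝ) < t := lt_trans one_pos ht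
    positivity
  · rw [ae_restrict_iff' measurableSet_Ioi]
    filter_upwards with t ht
    have ht1 : (1:ℝ) < t := ht
    have htp : (0:ℝ) < t := lt_trans one_pos ht1
    have h3 : (0:ℝ) < t ^ 2 := by positivity
    have h2 : t ^ 2 ≤ t ^ (n + 2) := pow_le_pow_right₀ ht1.le (by omega)
    rw [Real.norm_eq_abs, abs_of_nonneg (by positivity)]
    calc 1 / t ^ (n + 2) ≤ 1 / t ^ 2 := one_div_le_one_div_of_le h3 h2
      _ = t ^ (-2 : ℝ) := by
          rw [Real.rpow_neg htp.le, ← Real.rpow_natCast t 2]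
          norm_num

lemma val2 (n : ℕ) : (∫ t in Set.Ioi (1:ℝ), 1 / t ^ (n + 2)) = 1 / ((n : ℝ) + 1) := by
  have h := integral_Ioi_rpow_of_lt (a := -(n : ℝ) - 2) (by
    have : (0:ℝ) ≤ n := Nat.cast_nonneg n; linarith) one_pos
  rw [show (∫ t in Set.Ioi (1:ℝ), 1 / t ^ (n + 2)) = ∫ t in Set.Ioi (1:ℝ), t ^ (-(n:ℝ) - 2)
    from setIntegral_congr_fun measurableSet_Ioi fun t ht => ?_, h]
  · rw [Real.one_rpow]
    rw [show -(n:ℝ) - 2 + 1 = -((n:ℝ)+1) by ring]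
    rw [div_neg, neg_div, neg_neg, one_div]
  · have htp : (0:ℝ) < t := lt_trans one_pos ht
    rw [show -(n:ℝ) - 2 = -((n:ℝ) + 2) by ring, Real.rpow_neg htp.le,
      show ((n:ℝ) + 2) = ((n + 2 : ℕ) : ℝ) by push_cast; ring, Real.rpow_natCast, one_div]

lemma val0 (a : ℝ) (ha : 0 < a) :
    (∫ t in Set.Ioi (1:ℝ), 1 / (a ^ 2 + t ^ 2)) = (π / 2 - arctan (1 / a)) / a := by
  have hderiv : ∀ x ∈ Set.Ici (1:ℝ),
      HasDerivAt (fun t : ℝ => arctan (t * a⁻¹) * a⁻¹) (1 / (a ^ 2 + x ^ 2)) x := by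
    intro x _
    have h1 : HasDerivAt (fun t : ℝ => t * a⁻¹) a⁻¹ x := by
      simpa using (hasDerivAt_id x).mul_const a⁻¹
    have h2 := ((Real.hasDerivAt_arctan (x * a⁻¹)).comp x h1).mul_const a⁻¹
    refine h2.congr_deriv ?_
    have ha' : a ≠ 0 := ha.ne'
    field_simp
  have htend : Tendsto (fun t : ℝ => arctan (t * a⁻¹) * a⁻¹) atTop (nhds (π / 2 * a⁻¹)) := by
    have h1 : Tendsto (fun t : ℝ => t * a⁻¹) atTop atTop :=
      Tendsto.atTop_mul_const (inv_pos.2 ha) tendsto_id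
    exact ((Real.tendsto_arctan_atTop.mono_right nhdsWithin_le_nhds).comp h1).mul_const _
  have := integral_Ioi_of_hasDerivAt_of_tendsto' hderiv
    (by simpa using int1 a ha 0) htend
  rw [this]
  rw [one_div, one_mul]
  ring

lemma hodd (m n : ℕ) (h : (2*(m:ℝ) + 1) = 2*(n:ℝ)) : False := by
  have : ((2*m+1 : ℕ) : ℝ) = ((2*n : ℕ) : ℝ) := by push_cast; linarith
  have := Nat.cast_injective this
  omega

lemma aux (a : ℝ) (ha : 0 < a) (n : ℕ) :
    (∫ t in Set.Ioi (1:ℝ), 1 / (t ^ (2*n) * (a^2 + t^2))) =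
      (∑ i ∈ range n, (-1:ℝ)^(i+1) / ((2*(i:ℝ) + 2 - 2*(n:ℝ) - 1) * a^(2*i+2)))
      + (-1:ℝ)^n * (π/2 - arctan (1/a)) / a^(2*n+1) := by
  have ha' : a ≠ 0 := ha.ne'
  induction n with
  | zero =>
    simp only [Nat.mul_zero, pow_zero, one_mul, range_zero, sum_empty, zero_add, pow_one]
    rw [val0 a ha]
  | succ n ih =>
    have hcong : ∀ t ∈ Set.Ioi (1:ℝ), 1/(t^(2*(n+1))*(a^2+t^2)) =
        (1/a^2) * (1/t^(2*n+2)) - (1/a^2) * (1/(t^(2*n)*(a^2+t^2))) := by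
      intro t ht
      have htp : (0:ℝ) < t := lt_trans one_pos ht
      have htne : t ≠ 0 := htp.ne'
      have hd : a^2 + t^2 ≠ 0 := by positivity
      field_simp
      ring
    rw [setIntegral_congr_fun measurableSet_Ioi hcong,
      integral_sub ((int2 (2*n)).const_mul _) ((int1 a ha (2*n)).const_mul _),
      integral_const_mul, integral_const_mul, val2 (2*n), ih]
    rw [Finset.sum_range_succ']
    have hterm : ∀ i ∈ range n,
        (-1:ℝ)^(i+1+1) / ((2*((i+1:ℕ):ℝ) + 2 - 2*((n+1:ℕ):ℝ) - 1) * a^(2*(i+1)+2)) =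
        (-(1/a^2)) * ((-1:ℝ)^(i+1) / ((2*(i:ℝ) + 2 - 2*(n:ℝ) - 1) * a^(2*i+2))) := by
      intro i _
      have d1 : (2*(i:ℝ) + 2 - 2*(n:ℝ) - 1) ≠ 0 := fun h => hodd i n (by linarith)
      push_cast
      rw [show 2*((i:ℝ)+1) + 2 - 2*((n:ℝ)+1) - 1 = 2*(i:ℝ)+2-2*(n:ℝ)-1 by ring,
        show 2*(i+1)+2 = (2*i+2)+2 by ring, pow_add]
      field_simp
      ring
    rw [Finset.sum_congr rfl hterm, ← Finset.mul_sum]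
    have hf0 : (-1:ℝ)^(0+1) / ((2*((0:ℕ):ℝ) + 2 - 2*((n+1:ℕ):ℝ) - 1) * a^(2*0+2)) =
        1/a^2 * (1/(2*(n:ℝ)+1)) := by
      have d : (2*(n:ℝ)+1) ≠ 0 := by positivity
      push_cast
      rw [show 2*(0:ℝ) + 2 - 2*((n:ℝ)+1) - 1 = -(2*(n:ℝ)+1) by ring]
      rw [pow_one, neg_mul, div_neg, neg_div, neg_neg, one_div, one_div, one_div, mul_inv]
      ring
    have hT : (-1:ℝ)^(n+1) * (π/2 - arctan (1/a)) / a^(2*(n+1)+1) =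
        -(1/a^2) * ((-1:ℝ)^n * (π/2 - arctan (1/a)) / a^(2*n+1)) := by
      rw [show 2*(n+1)+1 = (2*n+1)+2 by ring, pow_add, pow_succ, pow_succ]
      have hc : a ^ (2*n+1) ≠ 0 := pow_ne_zero _ ha'
      field_simp
      try ring
      try exact Or.inl trivial
    rw [hf0, hT]
    push_cast [show ((2*n : ℕ):ℝ) = 2*(n:ℝ) by push_cast; ring]
    ring

/-- Closed-form evaluation of ∫_1^∞ dt/(t^{2n}(π²k²+t²)). -/
theorem integral_recursion_eval (n k : ℕ) (hn : 0 < n) (hk : 0 < k) :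
    (∫ t in Set.Ioi (1 : ℝ),
        1 / (t ^ (2 * n) * (Real.pi ^ 2 * (k : ℝ) ^ 2 + t ^ 2))) =
      (∑ l ∈ Finset.Icc 1 n,
          (-1 : ℝ) ^ l /
            ((2 * (l : ℝ) - 2 * (n : ℝ) - 1) * Real.pi ^ (2 * l) * (k : ℝ) ^ (2 * l))) +
        (-1 : ℝ) ^ n / (2 * Real.pi ^ (2 * n) * (k : ℝ) ^ (2 * n + 1)) -
        (-1 : ℝ) ^ n * Real.arctan (1 / ((k : ℝ) * Real.pi)) /
          (Real.pi ^ (2 * n + 1) * (k : ℝ) ^ (2 * n + 1)) := by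
  have hπ : (0:ℝ) < π := pi_pos
  have hkp : (0:ℝ) < (k:ℝ) := by exact_mod_cast hk
  have ha : (0:ℝ) < π * k := by positivity
  have h1 : ∀ t : ℝ, π ^ 2 * (k:ℝ) ^ 2 + t ^ 2 = (π * (k:ℝ)) ^ 2 + t ^ 2 := fun t => by
    rw [mul_pow]
  simp_rw [h1]
  rw [aux (π * k) ha n]
  have hS : (∑ l ∈ Finset.Icc 1 n, (-1:ℝ) ^ l /
        ((2 * (l:ℝ) - 2 * (n:ℝ) - 1) * π ^ (2*l) * (k:ℝ) ^ (2*l))) =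
      ∑ i ∈ range n, (-1:ℝ) ^ (i+1) / ((2*(i:ℝ) + 2 - 2*(n:ℝ) - 1) * (π*(k:ℝ)) ^ (2*i+2)) := by
    rw [← Finset.Ico_add_one_right_eq_Icc, Finset.sum_Ico_eq_sum_range]
    norm_num
    refine Finset.sum_congr rfl fun i _ => ?_
    rw [show 2*(1+i) = 2*i+2 by ring, mul_pow]
    push_cast
    ring_nf
  have hT : (-1:ℝ) ^ n * (π/2 - arctan (1/(π*(k:ℝ)))) / (π*(k:ℝ)) ^ (2*n+1) =
      (-1:ℝ) ^ n / (2 * π ^ (2*n) * (k:ℝ) ^ (2*n+1)) -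
      (-1:ℝ) ^ n * arctan (1 / ((k:ℝ) * π)) / (π ^ (2*n+1) * (k:ℝ) ^ (2*n+1)) := by
    rw [mul_comm (k:ℝ) π, mul_pow, pow_succ π (2*n)]
    have hk2 : (k:ℝ) ^ (2*n+1) ≠ 0 := pow_ne_zero _ hkp.ne'
    have hp2 : π ^ (2*n) ≠ 0 := pow_ne_zero _ hπ.ne'
    field_simp
  rw [hS, hT]
  ring
end

section
/- For every positive integer n, Σ_{k=1}^∞ (−1)^k·arctan(1/(kπ))/k^{2n+1} = (−1)^n·π^{2n+1} · Σ_{k=n+1}^∞ (−1)^k·(2^{2k}−2)·ζ(2k)/((2k−2n−1)·(2π)^{2k}), where both series converge. -/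
open Real MeasureTheory Filter Finset

lemma aux_summable_inv_pow {N : ℕ} (hN : 2 ≤ N) :
    Summable fun k : ℕ => 1 / ((k : ℝ) + 1) ^ N := by
  have h := (summable_nat_add_iff 1).mpr (summable_one_div_nat_pow.mpr (by omega : 1 < N))
  simpa [Nat.cast_add] using h

lemma aux_norm_inv_pow (N k : ℕ) :
    ‖1 / ((k : ℂ) + 1) ^ N‖ = 1 / ((k : ℝ) + 1) ^ N := by
  have : ((k : ℂ) + 1) = (((k : ℝ) + 1 : ℝ) : ℂ) := by push_cast; ring
  rw [this, norm_div, norm_one, norm_pow, Complex.norm_real, Real.norm_eq_abs,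
    abs_of_nonneg (by positivity)]

lemma aux_summable_inv_pow_c {N : ℕ} (hN : 2 ≤ N) :
    Summable fun k : ℕ => 1 / ((k : ℂ) + 1) ^ N := by
  apply Summable.of_norm
  have := aux_summable_inv_pow hN
  apply this.congr
  exact fun k => (aux_norm_inv_pow N k).symm

lemma aux_zeta_eq {N : ℕ} (hN : 2 ≤ N) :
    riemannZeta N = ∑' k : ℕ, 1 / ((k : ℂ) + 1) ^ N := by
  rw [zeta_nat_eq_tsum_of_gt_one (by omega : 1 < N)]
  have hsum : Summable fun n : ℕ => 1 / (n : ℂ) ^ N := by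
    have h := aux_summable_inv_pow_c hN
    apply (summable_nat_add_iff (f := fun n : ℕ => 1 / (n : ℂ) ^ N) 1).mp
    apply h.congr
    intro k
    push_cast
    ring
  rw [Summable.tsum_eq_zero_add hsum]
  have h0 : 1 / ((0 : ℕ) : ℂ) ^ N = 0 := by
    simp [zero_pow (by omega : N ≠ 0)]
  rw [h0, zero_add]
  congr 1
  ext k
  push_cast
  ring

lemma aux_summable_eta {N : ℕ} (hN : 2 ≤ N) :
    Summable fun k : ℕ => (-1 : ℂ) ^ k / ((k : ℂ) + 1) ^ N := by
  apply Summable.of_norm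
  apply (aux_summable_inv_pow hN).congr
  intro k
  rw [norm_div, norm_pow, norm_pow, norm_neg, norm_one, one_pow]
  rw [show ((k : ℂ) + 1) = (((k : ℝ) + 1 : ℝ) : ℂ) by push_cast; ring,
    Complex.norm_real, Real.norm_eq_abs, abs_of_nonneg (by positivity)]

lemma aux_eta_eq {N : ℕ} (hN : 2 ≤ N) :
    ∑' k : ℕ, (-1 : ℂ) ^ k / ((k : ℂ) + 1) ^ N
      = (1 - 2 * ((2 : ℂ) ^ N)⁻¹) * riemannZeta N := by
  have hS := aux_summable_inv_pow_c hN
  have hE := aux_summable_eta hN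
  set g : ℕ → ℂ := fun k => 1 / ((k : ℂ) + 1) ^ N - (-1 : ℂ) ^ k / ((k : ℂ) + 1) ^ N with hg
  have hge : ∀ j : ℕ, g (2 * j) = 0 := by
    intro j
    simp [hg, pow_mul]
  have hgo : ∀ j : ℕ, g (2 * j + 1) = 2 * ((2 : ℂ) ^ N)⁻¹ * (1 / ((j : ℂ) + 1) ^ N) := by
    intro j
    have h2 : (((2 * j + 1 : ℕ) : ℂ) + 1) = 2 * ((j : ℂ) + 1) := by push_cast; ring
    have hj : ((j : ℂ) + 1) ≠ 0 := by
      intro h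
      have := congrArg Complex.re h
      simp at this
      nlinarith [Nat.cast_nonneg (α := ℝ) j]
    rw [hg]
    simp only [h2, pow_succ, mul_pow]
    have hm1 : (-1 : ℂ) ^ (2 * j) = 1 := by simp [pow_mul]
    rw [pow_mul] at hm1 ⊢
    field_simp
    norm_num
  have hgsum : Summable g := hS.sub hE
  have heven : Summable fun j => g (2 * j) := by
    simpa [funext hge] using (summable_zero : Summable fun _ : ℕ => (0 : ℂ))
  have hodd : Summable fun j => g (2 * j + 1) := by
    rw [funext hgo]
    exact hS.mul_left _
  have key := tsum_even_add_odd heven hodd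
  rw [funext hge, funext hgo, tsum_zero, zero_add, tsum_mul_left] at key
  have key2 : ∑' k, g k = ∑' k : ℕ, 1 / ((k : ℂ) + 1) ^ N
      - ∑' k : ℕ, (-1 : ℂ) ^ k / ((k : ℂ) + 1) ^ N := Summable.tsum_sub hS hE
  rw [key2, ← aux_zeta_eq hN] at key
  linear_combination key

/-- Evaluation of the arctan-series Σ_{k≥1} (−1)^k arctan(1/(kπ))/k^{2n+1} as a
zeta-series Σ_{k≥n+1} (−1)^k (2^{2k}−2) ζ(2k)/((2k−2n−1)(2π)^{2k}). -/
theorem arctan_series_eval (n : ℕ) (hn : 0 < n) :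
    Summable (fun k : ℕ =>
        (-1 : ℝ) ^ (k + 1) * Real.arctan (1 / (((k : ℝ) + 1) * Real.pi)) /
          ((k : ℝ) + 1) ^ (2 * n + 1)) ∧
    Summable (fun k : ℕ =>
        (-1 : ℂ) ^ (k + n + 1) * ((2 : ℂ) ^ (2 * (k + n + 1)) - 2) *
            riemannZeta (2 * ((k : ℂ) + (n : ℂ) + 1)) /
          ((2 * ((k : ℂ) + (n : ℂ) + 1) - 2 * (n : ℂ) - 1) *
            (2 * (Real.pi : ℂ)) ^ (2 * (k + n + 1)))) ∧
    ((∑' k : ℕ,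
        (-1 : ℝ) ^ (k + 1) * Real.arctan (1 / (((k : ℝ) + 1) * Real.pi)) /
          ((k : ℝ) + 1) ^ (2 * n + 1) : ℝ) : ℂ) =
      (-1) ^ n * (Real.pi : ℂ) ^ (2 * n + 1) *
        ∑' k : ℕ,
          (-1 : ℂ) ^ (k + n + 1) * ((2 : ℂ) ^ (2 * (k + n + 1)) - 2) *
              riemannZeta (2 * ((k : ℂ) + (n : ℂ) + 1)) /
            ((2 * ((k : ℂ) + (n : ℂ) + 1) - 2 * (n : ℂ) - 1) *
              (2 * (Real.pi : ℂ)) ^ (2 * (k + n + 1))) := by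
  have hπ0 : (0:ℝ) < π := Real.pi_pos
  have hπ1 : (1:ℝ) < π := by linarith [Real.pi_gt_three]
  set x : ℕ → ℝ := fun k => 1 / (((k:ℝ)+1) * π) with hx
  have hxpos : ∀ k, 0 < x k := by
    intro k; rw [hx]; positivity
  have hxlt : ∀ k, ‖x k‖ < 1 := by
    intro k
    have hk : (0:ℝ) ≤ (k:ℝ) := Nat.cast_nonneg k
    rw [hx, Real.norm_eq_abs, abs_of_nonneg (by positivity), div_lt_one (by positivity)]
    nlinarith
  set F : ℕ → ℕ → ℝ := fun k m =>
    (-1:ℝ)^(k+1) * ((-1:ℝ)^m * (x k)^(2*m+1) / ((2*m+1 : ℕ) : ℝ)) / (((k:ℝ)+1)^(2*n+1))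
    with hF
  have hFsum : ∀ k, HasSum (F k)
      ((-1:ℝ)^(k+1) * Real.arctan (x k) / ((k:ℝ)+1)^(2*n+1)) := fun k =>
    ((Real.hasSum_arctan (hxlt k)).mul_left ((-1:ℝ)^(k+1))).div_const _
  -- norm bound
  have hbound : ∀ p : ℕ × ℕ, |F p.1 p.2| ≤ (1/((p.1:ℝ)+1)^2) * (π⁻¹)^p.2 := by
    rintro ⟨k, m⟩
    have hk : (0:ℝ) ≤ (k:ℝ) := Nat.cast_nonneg k
    have hk1 : (1:ℝ) ≤ (k:ℝ)+1 := by linarith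
    have habs : |F k m| = (x k)^(2*m+1) / (((2*m+1:ℕ):ℝ) * ((k:ℝ)+1)^(2*n+1)) := by
      rw [hF]
      simp [abs_div, abs_mul, abs_pow, abs_of_nonneg (hxpos k).le,
        abs_of_nonneg (show (0:ℝ) ≤ (k:ℝ)+1 by positivity),
        abs_of_nonneg (show (0:ℝ) ≤ ((2*m+1:ℕ):ℝ) by positivity),
        abs_of_nonneg (show (0:ℝ) ≤ 2*(m:ℝ)+1 by positivity), div_div]
    rw [habs]
    have hxk : x k = ((k:ℝ)+1)⁻¹ * π⁻¹ := by rw [hx]; field_simp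
    have h1 : (x k)^(2*m+1) ≤ ((k:ℝ)+1)⁻¹ * (π⁻¹)^m := by
      rw [hxk, mul_pow]
      have ha : (((k:ℝ)+1)⁻¹)^(2*m+1) ≤ (((k:ℝ)+1)⁻¹)^1 :=
        pow_le_pow_of_le_one (by positivity)
          (by rw [inv_le_one_iff₀]; right; exact hk1) (by omega)
      rw [pow_one] at ha
      have hb : (π⁻¹)^(2*m+1) ≤ (π⁻¹)^m :=
        pow_le_pow_of_le_one (by positivity) (by rw [inv_le_one_iff₀]; right; linarith)
          (by omega)
      exact mul_le_mul ha hb (by positivity) (by positivity)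
    have h2 : (1:ℝ) * ((k:ℝ)+1) ≤ ((2*m+1:ℕ):ℝ) * ((k:ℝ)+1)^(2*n+1) := by
      have hc : (1:ℝ) ≤ ((2*m+1:ℕ):ℝ) := by
        have : (1:ℕ) ≤ 2*m+1 := by omega
        exact_mod_cast this
      have hd : ((k:ℝ)+1) ≤ ((k:ℝ)+1)^(2*n+1) := by
        calc ((k:ℝ)+1) = ((k:ℝ)+1)^1 := (pow_one _).symm
        _ ≤ ((k:ℝ)+1)^(2*n+1) := pow_le_pow_right₀ hk1 (by omega)
      exact mul_le_mul hc hd (by positivity) (by positivity)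
    rw [one_mul] at h2
    calc (x k)^(2*m+1) / (((2*m+1:ℕ):ℝ) * ((k:ℝ)+1)^(2*n+1))
        ≤ (((k:ℝ)+1)⁻¹ * (π⁻¹)^m) / ((k:ℝ)+1) := by
          apply div_le_div₀ (by positivity) h1 (by positivity) h2
      _ = (1/((k:ℝ)+1)^2) * (π⁻¹)^m := by
          field_simp
  have hprod : Summable (Function.uncurry F) := by
    apply summable_abs_iff.mp
    apply Summable.of_nonneg_of_le (fun p => abs_nonneg _) hbound
    exact (aux_summable_inv_pow (le_refl 2)).mul_of_nonneg
      (summable_geometric_of_lt_one (by positivity) (by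
        rw [inv_lt_one_iff₀]; right; exact hπ1))
      (fun k => by positivity) (fun m => by positivity)
  have hA : HasSum (fun k => (-1:ℝ)^(k+1) * Real.arctan (x k) / ((k:ℝ)+1)^(2*n+1))
      (∑' p : ℕ × ℕ, Function.uncurry F p) :=
    hprod.hasSum.prod_fiberwise hFsum
  -- rewrite each F k m as c_m * b m k
  have hFeq : ∀ m k : ℕ, F k m =
      ((-1:ℝ)^m / (((2*m+1:ℕ):ℝ) * π^(2*m+1))) *
        ((-1:ℝ)^(k+1) / ((k:ℝ)+1)^(2*(m+n+1))) := by
    intro m k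
    have hk : ((k:ℝ)+1) ≠ 0 := by positivity
    have hc : (((2*m+1:ℕ):ℝ)) ≠ 0 := by positivity
    have hπ : (π:ℝ) ≠ 0 := by positivity
    rw [hF, hx]
    simp only []
    rw [show 2*(m+n+1) = (2*m+1)+(2*n+1) by ring]
    rw [pow_add, div_pow, mul_pow, one_pow]
    field_simp
    ring
  -- inner sums over k
  have hGsum : ∀ m : ℕ, HasSum (fun k => F k m) (∑' k, F k m) := fun m =>
    (hprod.prod_symm.prod_factor m).hasSum
  have hG : Summable (fun m => ∑' k, F k m) :=
    (hprod.prod_symm.hasSum.prod_fiberwise fun m => hGsum m).summable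
  -- the complex target sequence
  set t : ℕ → ℂ := fun m =>
    (-1 : ℂ) ^ (m + n + 1) * ((2 : ℂ) ^ (2 * (m + n + 1)) - 2) *
        riemannZeta (2 * ((m : ℂ) + (n : ℂ) + 1)) /
      ((2 * ((m : ℂ) + (n : ℂ) + 1) - 2 * (n : ℂ) - 1) *
        (2 * (Real.pi : ℂ)) ^ (2 * (m + n + 1))) with ht
  set c : ℂ := (-1) ^ n * (Real.pi : ℂ) ^ (2 * n + 1) with hc
  have hcne : c ≠ 0 := by
    rw [hc]
    apply mul_ne_zero (pow_ne_zero _ (by norm_num)) (pow_ne_zero _ ?_)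
    exact_mod_cast Real.pi_ne_zero
  -- key cast identity
  have hcast : ∀ m : ℕ, ((∑' k, F k m : ℝ) : ℂ) = c * t m := by
    intro m
    have hN : 2 ≤ 2*(m+n+1) := by omega
    have hsum1 : (∑' k, F k m) =
        ((-1:ℝ)^m / (((2*m+1:ℕ):ℝ) * π^(2*m+1))) *
          ∑' k : ℕ, ((-1:ℝ)^(k+1) / ((k:ℝ)+1)^(2*(m+n+1))) :=
      (tsum_congr (hFeq m)).trans tsum_mul_left
    rw [hsum1]
    push_cast [Complex.ofReal_tsum]
    have hinner : (∑' k : ℕ, ((-1:ℂ)^(k+1) / ((k:ℂ)+1)^(2*(m+n+1))))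
        = -((1 - 2 * ((2 : ℂ) ^ (2*(m+n+1)))⁻¹) * riemannZeta ((2*(m+n+1) : ℕ))) := by
      rw [← aux_eta_eq hN, ← tsum_neg]
      exact tsum_congr fun k => by rw [pow_succ]; ring
    rw [hinner]
    simp only [ht, hc]
    have harg : (2 * ((m : ℂ) + (n : ℂ) + 1)) = (((2*(m+n+1) : ℕ) : ℕ) : ℂ) := by
      push_cast; ring
    have hden : (2 * ((m : ℂ) + (n : ℂ) + 1) - 2 * (n : ℂ) - 1) = 2*(m:ℂ)+1 := by ring
    rw [hden, harg]
    set Z : ℂ := riemannZeta (((2*(m+n+1) : ℕ) : ℂ)) with hZ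
    have h2m : (2*(m:ℂ)+1) ≠ 0 := by
      intro h
      have := congrArg Complex.re h
      simp at this
      nlinarith [Nat.cast_nonneg (α := ℝ) m]
    have hπc : ((Real.pi : ℂ)) ≠ 0 := by exact_mod_cast Real.pi_ne_zero
    have h2pow : ((2:ℂ) ^ (2*(m+n+1))) ≠ 0 := pow_ne_zero _ (by norm_num)
    have h2πpow : ((2*(Real.pi:ℂ)) ^ (2*(m+n+1))) ≠ 0 :=
      pow_ne_zero _ (mul_ne_zero (by norm_num) hπc)
    rw [show ((-1:ℂ))^(m+n+1) = (-1)^m * (-1)^n * (-1) by rw [pow_add, pow_add, pow_one]]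
    rcases neg_one_pow_eq_or ℂ n with h | h <;> rw [h] <;> field_simp <;> ring
  -- summability of t
  have hGc : Summable (fun m => ((∑' k, F k m : ℝ) : ℂ)) :=
    Complex.summable_ofReal.mpr hG
  rw [funext hcast] at hGc
  have hT : Summable t := (summable_mul_left_iff hcne).mp hGc
  refine ⟨hA.summable, hT, ?_⟩
  -- final computation
  have hstep1 : (∑' k, (-1:ℝ)^(k+1) * Real.arctan (x k) / ((k:ℝ)+1)^(2*n+1))
      = ∑' m, ∑' k, F k m := by
    rw [show (∑' k, (-1:ℝ)^(k+1) * Real.arctan (x k) / ((k:ℝ)+1)^(2*n+1))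
        = ∑' k, ∑' m, F k m from tsum_congr fun k => ((hFsum k).tsum_eq).symm]
    exact (Summable.tsum_comm hprod).symm
  rw [hstep1, Complex.ofReal_tsum]
  rw [tsum_congr hcast, tsum_mul_left]
end

section
/- For every real s > −1, the function t ↦ t·e^{−st}/sinh t is integrable on (0, ∞) and ∫_0^∞ (t/sinh t)·e^{−st} dt = (1/2)·ζ(2, (s+1)/2) = (1/2)·Σ_{k=0}^∞ ( k + (s+1)/2 )^{−2}. -/
open Real MeasureTheory Filter Finset

private lemma aux_int (c : ℝ) (hc : 0 < c) :
    IntegrableOn (fun t : ℝ => t * Real.exp (-c * t)) (Set.Ioi 0) := by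
  have := integrableOn_rpow_mul_exp_neg_mul_rpow (p := 1) (s := 1) (b := c)
    (by norm_num) one_pos hc
  simpa using this

private lemma aux_val (c : ℝ) (hc : 0 < c) :
    (∫ t in Set.Ioi (0:ℝ), t * Real.exp (-c * t)) = 1 / c ^ 2 := by
  have h := Real.integral_rpow_mul_exp_neg_mul_Ioi (a := 2) (r := c) two_pos hc
  rw [show (2:ℝ) - 1 = 1 by norm_num] at h
  simp only [Real.rpow_one, Real.Gamma_two, mul_one, neg_mul] at h ⊢
  rw [h, show ((2:ℝ)) = ((2:ℕ):ℝ) by norm_num, Real.rpow_natCast, div_pow, one_pow]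

private lemma aux_key (s t : ℝ) (ht : 0 < t) :
    HasSum (fun k : ℕ => 2 * (t * Real.exp (-(s + 1 + 2 * k) * t)))
      (t / Real.sinh t * Real.exp (-s * t)) := by
  have hr0 : (0:ℝ) ≤ Real.exp (-(2 * t)) := Real.exp_nonneg _
  have hr1 : Real.exp (-(2 * t)) < 1 := Real.exp_lt_one_iff.2 (by linarith)
  have hgeom : HasSum (fun k : ℕ => (Real.exp (-(2 * t))) ^ k)
      (1 - Real.exp (-(2 * t)))⁻¹ := hasSum_geometric_of_lt_one hr0 hr1
  have h := hgeom.mul_left (2 * t * Real.exp (-(s + 1) * t))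
  have hsinh2 : Real.sinh t = Real.exp t * (1 - Real.exp (-(2 * t))) / 2 := by
    rw [Real.sinh_eq, mul_sub, mul_one, ← Real.exp_add]
    ring_nf
  convert h using 1
  · rfl
  · funext k
    rw [← Real.exp_nat_mul, mul_assoc (2 * t), ← Real.exp_add,
      show -(s + 1) * t + (k:ℝ) * -(2 * t) = -(s + 1 + 2 * (k:ℝ)) * t by ring]
    ring
  · rw [hsinh2, show (-(s + 1) * t) = -s * t + -t by ring, Real.exp_add,
      show (-(2 * t)) = -t + -t by ring, Real.exp_add, Real.exp_neg]
    have h2 : Real.exp t ≠ 0 := (Real.exp_pos t).ne'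
    have h1 : (1 : ℝ) - (Real.exp t)⁻¹ * (Real.exp t)⁻¹ ≠ 0 := by
      have := Real.exp_lt_one_iff.2 (show -t < 0 by linarith)
      rw [Real.exp_neg] at this
      nlinarith [inv_pos.2 (Real.exp_pos t)]
    field_simp

/-- Laplace transform of t/sinh t: ∫_0^∞ (t/sinh t) e^{−st} dt = (1/2) ζ(2,(s+1)/2),
where ζ(2,a) = Σ_{k=0}^∞ (k+a)^{-2} is the Hurwitz zeta function at exponent 2. -/
theorem laplace_t_csch (s : ℝ) (hs : -1 < s) :
    IntegrableOn (fun t : ℝ => t * Real.exp (-s * t) / Real.sinh t)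
      (Set.Ioi (0 : ℝ)) ∧
    (∫ t in Set.Ioi (0 : ℝ), t / Real.sinh t * Real.exp (-s * t)) =
      (1 / 2) * ∑' k : ℕ, 1 / ((k : ℝ) + (s + 1) / 2) ^ 2 := by
  have hs1 : 0 < s + 1 := by linarith
  -- integrability
  have hmeas : AEStronglyMeasurable (fun t : ℝ => t * Real.exp (-s * t) / Real.sinh t)
      (volume.restrict (Set.Ioi (0:ℝ))) := by
    apply ContinuousOn.aestronglyMeasurable _ measurableSet_Ioi
    exact ((continuousOn_id.mul ((Real.continuous_exp.comp
      (continuous_const.mul continuous_id)).continuousOn)).div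
      Real.continuous_sinh.continuousOn
      (fun t ht => (Real.sinh_pos_iff.2 ht).ne'))
  have hbound_int : IntegrableOn
      (fun t : ℝ => Real.exp (-(s+1) * t) + 2 * (t * Real.exp (-(s+1) * t)))
      (Set.Ioi (0:ℝ)) :=
    (exp_neg_integrableOn_Ioi 0 hs1).add ((aux_int (s+1) hs1).const_mul 2)
  have hIntegrable : IntegrableOn (fun t : ℝ => t * Real.exp (-s * t) / Real.sinh t)
      (Set.Ioi (0 : ℝ)) := by
    apply Integrable.mono' hbound_int hmeas
    filter_upwards [ae_restrict_mem measurableSet_Ioi] with t ht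
    have ht0 : 0 < t := ht
    have hsinh : 0 < Real.sinh t := Real.sinh_pos_iff.2 ht0
    have hlow : t * Real.exp t / (1 + 2 * t) ≤ Real.sinh t := by
      rw [Real.sinh_eq]
      rw [div_le_div_iff₀ (by linarith) two_pos]
      have key : Real.exp (-t) * (1 + 2 * t) ≤ Real.exp t := by
        have h1 : (1 : ℝ) + 2 * t ≤ Real.exp (2 * t) := by
          have := Real.add_one_le_exp (2 * t); linarith
        calc Real.exp (-t) * (1 + 2 * t) ≤ Real.exp (-t) * Real.exp (2 * t) := by
              exact mul_le_mul_of_nonneg_left h1 (Real.exp_nonneg _)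
          _ = Real.exp t := by rw [← Real.exp_add]; ring_nf
      nlinarith [Real.exp_pos t, ht0]
    rw [Real.norm_of_nonneg (by positivity)]
    have hb : t * Real.exp (-s * t) / Real.sinh t ≤ (1 + 2 * t) * Real.exp (-(s+1) * t) := by
      rw [div_le_iff₀ hsinh]
      calc (1 + 2 * t) * Real.exp (-(s+1) * t) * Real.sinh t
          ≥ (1 + 2 * t) * Real.exp (-(s+1) * t) * (t * Real.exp t / (1 + 2 * t)) := by
            apply mul_le_mul_of_nonneg_left hlow (by positivity)
        _ = t * (Real.exp (-(s+1) * t) * Real.exp t) := by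
            field_simp
        _ = t * Real.exp (-s * t) := by
            rw [← Real.exp_add, show -(s+1) * t + t = -s * t by ring]
    calc t * Real.exp (-s * t) / Real.sinh t ≤ (1 + 2 * t) * Real.exp (-(s+1) * t) := hb
      _ = Real.exp (-(s+1) * t) + 2 * (t * Real.exp (-(s+1) * t)) := by ring
  refine ⟨hIntegrable, ?_⟩
  -- the series computation
  set F : ℕ → ℝ → ℝ := fun k t => 2 * (t * Real.exp (-(s + 1 + 2 * k) * t)) with hF
  have hck : ∀ k : ℕ, 0 < s + 1 + 2 * (k:ℝ) := fun k => by positivity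
  have hF_int : ∀ k : ℕ, Integrable (F k) (volume.restrict (Set.Ioi (0:ℝ))) :=
    fun k => (aux_int _ (hck k)).const_mul 2
  have hF_val : ∀ k : ℕ, (∫ t in Set.Ioi (0:ℝ), F k t) = 2 * (1 / (s + 1 + 2 * (k:ℝ)) ^ 2) := by
    intro k
    rw [hF]
    simp only
    rw [MeasureTheory.integral_const_mul, aux_val _ (hck k)]
  have hsum2 : Summable (fun k : ℕ => 2 * (1 / (s + 1 + 2 * (k:ℝ)) ^ 2)) := by
    apply Summable.mul_left
    have h0 := (Real.summable_one_div_nat_add_rpow ((s+1)/2) 2).2 one_lt_two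
    have h1 : Summable (fun k : ℕ => 1 / ((k:ℝ) + (s+1)/2) ^ 2) := by
      refine h0.congr fun k => ?_
      rw [abs_of_pos (by have := Nat.cast_nonneg (α := ℝ) k; linarith), show ((2:ℝ)) = ((2:ℕ):ℝ) by norm_num,
        Real.rpow_natCast]
    have := h1.mul_left (1/4 : ℝ)
    refine this.congr fun k => ?_
    have : (s + 1 + 2 * (k:ℝ)) ^ 2 = 4 * ((k:ℝ) + (s+1)/2) ^ 2 := by ring
    rw [this]
    field_simp
  have hF_norm : ∀ k : ℕ, (∫ t in Set.Ioi (0:ℝ), ‖F k t‖) = 2 * (1 / (s + 1 + 2 * (k:ℝ)) ^ 2) := by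
    intro k
    rw [← hF_val k]
    apply setIntegral_congr_fun measurableSet_Ioi
    intro t ht
    have ht0 : (0:ℝ) < t := ht
    exact Real.norm_of_nonneg (by positivity)
  have hswap := MeasureTheory.integral_tsum_of_summable_integral_norm hF_int
    (by simpa only [hF_norm] using hsum2)
  have hpt : ∀ t ∈ Set.Ioi (0:ℝ),
      t / Real.sinh t * Real.exp (-s * t) = ∑' k : ℕ, F k t := fun t ht =>
    (aux_key s t ht).tsum_eq.symm
  rw [setIntegral_congr_fun measurableSet_Ioi hpt, ← hswap]
  rw [← tsum_mul_left]
  apply tsum_congr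
  intro k
  rw [hF_val k]
  have : (s + 1 + 2 * (k:ℝ)) ^ 2 = 4 * ((k:ℝ) + (s+1)/2) ^ 2 := by ring
  rw [this]
  have hk2 : ((k:ℝ) + (s+1)/2) ^ 2 ≠ 0 :=
    pow_ne_zero 2 (by have := Nat.cast_nonneg (α := ℝ) k; linarith)
  field_simp
  ring
end

section
/- For every integer k ≥ 1, (2k)! · Σ_{l=1}^{k} 2^{2l}·B_{2l}/((2l)!·(2k−2l)!) = (2k−1) − (2^{2k}−2)·B_{2k}. -/
open Real Finset

section Aux
open PowerSeries Finset

lemma ps_key : rescale (2:ℚ) (bernoulliPowerSeries ℚ) * (exp ℚ + 1) =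
    PowerSeries.C (2:ℚ) * bernoulliPowerSeries ℚ := by
  have h := bernoulliPowerSeries_mul_exp_sub_one ℚ
  have h2 := congrArg (rescale (2:ℚ)) h
  rw [map_mul, map_sub, map_one, rescale_X] at h2
  have hE : rescale (2:ℚ) (exp ℚ) = exp ℚ ^ 2 := by
    rw [exp_pow_eq_rescale_exp]; norm_num
  rw [hE] at h2
  have hne : exp ℚ - 1 ≠ 0 := by
    intro hcon
    have := congrArg (PowerSeries.coeff (R := ℚ) 1) hcon
    simp [coeff_exp] at this
  apply mul_right_cancel₀ hne
  calc rescale (2:ℚ) (bernoulliPowerSeries ℚ) * (exp ℚ + 1) * (exp ℚ - 1)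
      = rescale (2:ℚ) (bernoulliPowerSeries ℚ) * (exp ℚ ^ 2 - 1) := by ring
    _ = PowerSeries.C (2:ℚ) * X := h2
    _ = PowerSeries.C (2:ℚ) * (bernoulliPowerSeries ℚ * (exp ℚ - 1)) := by rw [h]
    _ = PowerSeries.C (2:ℚ) * bernoulliPowerSeries ℚ * (exp ℚ - 1) := by ring

lemma key2 (n : ℕ) : ∑ i ∈ range (n+1), (n.choose i : ℚ) * 2^i * bernoulli i
    = (2 - 2^n) * bernoulli n := by
  have hmul : rescale (2:ℚ) (bernoulliPowerSeries ℚ) * exp ℚ =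
      PowerSeries.C (2:ℚ) * bernoulliPowerSeries ℚ - rescale (2:ℚ) (bernoulliPowerSeries ℚ) := by
    have := ps_key; linear_combination this
  have h := congrArg (PowerSeries.coeff (R := ℚ) n) hmul
  rw [PowerSeries.coeff_mul, map_sub, PowerSeries.coeff_C_mul,
    Finset.Nat.sum_antidiagonal_eq_sum_range_succ_mk] at h
  simp only [coeff_rescale, bernoulliPowerSeries, PowerSeries.coeff_mk, PowerSeries.coeff_exp,
    Algebra.algebraMap_self, RingHom.id_apply] at h
  -- h : ∑ i ∈ range (n+1), 2^i * (bernoulli i / i!) * (1/(n-i)!) = 2*(bernoulli n/n!) - 2^n*(bernoulli n/n!)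
  have hfac : ∀ m : ℕ, (m.factorial : ℚ) ≠ 0 := fun m => Nat.cast_ne_zero.mpr m.factorial_ne_zero
  have h2 := congrArg (fun q : ℚ => (n.factorial : ℚ) * q) h
  simp only [Finset.mul_sum] at h2
  calc ∑ i ∈ range (n+1), (n.choose i : ℚ) * 2^i * bernoulli i
      = ∑ i ∈ range (n+1), (n.factorial : ℚ) * (2^i * (bernoulli i / i.factorial) * (1/(n-i).factorial)) := by
        refine Finset.sum_congr rfl fun i hi => ?_
        rw [Nat.cast_choose ℚ (Nat.lt_succ_iff.mp (Finset.mem_range.mp hi))]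
        field_simp
    _ = (n.factorial : ℚ) * (2 * (bernoulli n / n.factorial) - 2^n * (bernoulli n / n.factorial)) := h2
    _ = (2 - 2^n) * bernoulli n := by field_simp

lemma split_sum (f : ℕ → ℚ) (hf : ∀ i, Odd i → 1 < i → f i = 0) :
    ∀ k, 1 ≤ k → ∑ i ∈ range (2*k+1), f i = f 0 + f 1 + ∑ l ∈ Icc 1 k, f (2*l) := by
  intro k hk
  induction k, hk using Nat.le_induction with
  | base =>
    rw [show 2*1+1 = 3 by norm_num, Finset.sum_range_succ, Finset.sum_range_succ,
      Finset.sum_range_succ, Finset.sum_range_zero, Icc_self, Finset.sum_singleton]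
    ring
  | succ k hk ih =>
    have : 2*(k+1)+1 = (2*k+1) + 1 + 1 := by ring
    rw [this, Finset.sum_range_succ, Finset.sum_range_succ, ih,
      Finset.sum_Icc_succ_top (by omega : 1 ≤ k+1),
      hf (2*k+1) ⟨k, by ring⟩ (by omega)]
    rw [show 2*k+1+1 = 2*(k+1) by ring]
    ring

lemma mainQ (k : ℕ) (hk : 1 ≤ k) :
    ((2 * k).factorial : ℚ) *
        ∑ l ∈ Finset.Icc 1 k,
          (2 : ℚ) ^ (2 * l) * (bernoulli (2 * l)) /
            (((2 * l).factorial : ℚ) * ((2 * k - 2 * l).factorial : ℚ)) =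
      (2 * (k : ℚ) - 1) - ((2 : ℚ) ^ (2 * k) - 2) * (bernoulli (2 * k)) := by
  have hs := split_sum (fun i => ((2*k).choose i : ℚ) * 2^i * bernoulli i)
    (fun i hi hi1 => by
      beta_reduce
      rw [bernoulli_eq_bernoulli'_of_ne_one (by omega), bernoulli'_eq_zero_of_odd hi hi1, mul_zero])
    k hk
  rw [key2 (2*k)] at hs
  simp only [Nat.choose_zero_right, Nat.choose_one_right, bernoulli_zero, bernoulli_one] at hs
  have hIcc : ∑ l ∈ Icc 1 k, ((2*k).choose (2*l) : ℚ) * 2^(2*l) * bernoulli (2*l)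
      = ((2 * k).factorial : ℚ) * ∑ l ∈ Finset.Icc 1 k,
          (2 : ℚ) ^ (2 * l) * (bernoulli (2 * l)) /
            (((2 * l).factorial : ℚ) * ((2 * k - 2 * l).factorial : ℚ)) := by
    rw [Finset.mul_sum]
    refine Finset.sum_congr rfl fun l hl => ?_
    have hle : 2*l ≤ 2*k := by
      have := (Finset.mem_Icc.mp hl).2; omega
    rw [Nat.cast_choose ℚ hle]
    have h1 : ((2*l).factorial : ℚ) ≠ 0 := Nat.cast_ne_zero.mpr (Nat.factorial_ne_zero _)
    have h2 : ((2*k - 2*l).factorial : ℚ) ≠ 0 := Nat.cast_ne_zero.mpr (Nat.factorial_ne_zero _)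
    field_simp
  rw [hIcc] at hs
  push_cast at hs
  linear_combination -hs

end Aux

/-- Bernoulli-number summation identity:
(2k)! Σ_{l=1}^{k} 2^{2l} B_{2l}/((2l)!(2k−2l)!) = (2k−1) − (2^{2k}−2) B_{2k}. -/
theorem bernoulli_sum_identity_two (k : ℕ) (hk : 1 ≤ k) :
    ((2 * k).factorial : ℝ) *
        ∑ l ∈ Finset.Icc 1 k,
          (2 : ℝ) ^ (2 * l) * (bernoulli (2 * l) : ℝ) /
            (((2 * l).factorial : ℝ) * ((2 * k - 2 * l).factorial : ℝ)) =
      (2 * (k : ℝ) - 1) - ((2 : ℝ) ^ (2 * k) - 2) * (bernoulli (2 * k) : ℝ) := by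
  have h := mainQ k hk
  have h2 := congrArg (fun q : ℚ => (q : ℝ)) h
  push_cast at h2
  exact h2
end
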